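/- Let N ≥ 1 and define coefficients c^0 = 1, c^{i+1} = -s^{-1} q^{2(N-i-2)} c^{i} in ℚ(q,s). Then the vector w = ∑_{i=0}^{N-1} c^{i} · v_i ⊗ v_{N-1-i} satisfies (E ⊗ K + 1 ⊗ E)(w) = 0, where on each tensor factor E v_i = v_{i-1} (E v_0 = 0) and K v_i = s q^{-2i} v_i. -/

import Mathlib

noncomputable section

/-- The field `ℚ(q,s)` of rational functions in two variables. -/
abbrev F2 : Type := FractionRing (MvPolynomial (Fin 2) ℤ)

/-- The variable `q`. -/
def qv : F2 := algebraMap (MvPolynomial (Fin 2) ℤ) F2 (MvPolynomial.X 0)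

/-- The variable `s`. -/
def sv : F2 := algebraMap (MvPolynomial (Fin 2) ℤ) F2 (MvPolynomial.X 1)

/-- The coefficients `c^0 = 1`, `c^{i+1} = -s⁻¹ q^{2(N-i-2)} c^i`. -/
def c8 (N : ℕ) : ℕ → F2
  | 0 => 1
  | i + 1 => -sv⁻¹ * qv ^ (2 * ((N : ℤ) - (i : ℤ) - 2)) * c8 N i

/-- The vector `w = ∑_{i=0}^{N-1} c^i · v_i ⊗ v_{N-1-i}` in coordinates with
respect to the basis `v_a ⊗ v_b` of the tensor square. -/
def w8 (N : ℕ) : ℕ → ℕ → F2 :=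
  fun a b => if a ≤ N - 1 ∧ b = N - 1 - a then c8 N a else 0

/-- `(E ⊗ K + 1 ⊗ E)(w) = 0`: in coordinates, the coefficient of `v_a ⊗ v_b`
in `(E ⊗ K + 1 ⊗ E)(w)` is `s q^{-2b} w(a+1, b) + w(a, b+1)`, and it vanishes. -/
theorem coev_highest_weight (N : ℕ) (hN : 1 ≤ N) :
    ∀ a b : ℕ,
      sv * qv ^ (-2 * (b : ℤ)) * w8 N (a + 1) b + w8 N a (b + 1) = 0 := by
  intro a b
  by_cases h : a + 1 ≤ N - 1 ∧ b = N - 1 - (a + 1)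
  · have h2 : a ≤ N - 1 ∧ b + 1 = N - 1 - a := by omega
    simp only [w8, if_pos h, if_pos h2]
    rw [c8]
    have hb : 2 * ((N : ℤ) - (a : ℤ) - 2) = 2 * (b : ℤ) := by omega
    rw [hb]
    have hq : qv ≠ 0 := by
      simp [qv, map_ne_zero_iff _ (IsFractionRing.injective (MvPolynomial (Fin 2) ℤ) F2),
        MvPolynomial.X_ne_zero]
    have hs : sv ≠ 0 := by
      simp [sv, map_ne_zero_iff _ (IsFractionRing.injective (MvPolynomial (Fin 2) ℤ) F2),
        MvPolynomial.X_ne_zero]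
    have hqq : qv ^ (-2 * (b : ℤ)) * qv ^ (2 * (b : ℤ)) = 1 := by
      rw [← zpow_add₀ hq]; norm_num
    field_simp
    ring_nf
    rw [mul_assoc, ← zpow_add₀ hq, neg_add_cancel, zpow_zero, mul_one, sub_self]
  · have h2 : ¬(a ≤ N - 1 ∧ b + 1 = N - 1 - a) := by omega
    simp [w8, h, h2]
    intro h3 h4; exfalso; omega

end
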